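/- Let r_1 be distributed Uniform(0,1), let r_2 = {r_1 + 1/2} and r_3 = 1 − {2 r_1}, where {x} denotes the fractional part of x, and let σ be a uniformly distributed random permutation of {1, 2, 3}, independent of r_1. Define U_i = r_{σ(i)} for i = 1, 2, 3. Then {U_1, U_2, U_3} are pairwise negatively associated; equivalently, for every i ≠ j and all u, v ∈ ℝ, P(U_i ≤ u, U_j ≤ v) ≤ P(U_i ≤ u) · P(U_j ≤ v). -/

import Mathlib

open MeasureTheory


noncomputable def pdF : Fin 3 → ℝ → ℝ := fun k x =>
  ![x, Int.fract (x + 1 / 2), 1 - Int.fract (2 * x)] k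

@[simp] lemma pdF0 (x : ℝ) : pdF 0 x = x := rfl
@[simp] lemma pdF1 (x : ℝ) : pdF 1 x = Int.fract (x + 1/2) := rfl
@[simp] lemma pdF2 (x : ℝ) : pdF 2 x = 1 - Int.fract (2 * x) := rfl

lemma fract_half_lo {x : ℝ} (h0 : 0 ≤ x) (h1 : x < 1/2) :
    Int.fract (x + 1/2) = x + 1/2 :=
  Int.fract_eq_self.mpr ⟨by linarith, by linarith⟩

lemma fract_half_hi {x : ℝ} (h0 : 1/2 ≤ x) (h1 : x < 1) :
    Int.fract (x + 1/2) = x - 1/2 := by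
  rw [show x + 1/2 = (x - 1/2) + 1 by ring, Int.fract_add_one]
  exact Int.fract_eq_self.mpr ⟨by linarith, by linarith⟩

lemma fract_two_lo {x : ℝ} (h0 : 0 ≤ x) (h1 : x < 1/2) :
    Int.fract (2 * x) = 2 * x :=
  Int.fract_eq_self.mpr ⟨by linarith, by linarith⟩

lemma fract_two_hi {x : ℝ} (h0 : 1/2 ≤ x) (h1 : x < 1) :
    Int.fract (2 * x) = 2 * x - 1 := by
  conv_lhs => rw [show 2 * x = (2 * x - 1) + 1 by ring]
  rw [Int.fract_add_one]
  exact Int.fract_eq_self.mpr ⟨by linarith, by linarith⟩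

lemma vol_between {a b : ℝ} {s : Set ℝ} (h1 : Set.Ioo a b ⊆ s) (h2 : s ⊆ Set.Icc a b) :
    volume s = ENNReal.ofReal (b - a) := by
  refine le_antisymm ((measure_mono h2).trans_eq Real.volume_Icc) ?_
  calc ENNReal.ofReal (b - a) = volume (Set.Ioo a b) := Real.volume_Ioo.symm
  _ ≤ volume s := measure_mono h1

lemma vol_split (S : Set ℝ) :
    volume S = volume (S ∩ Set.Iio (1/2)) + volume (S ∩ Set.Ici (1/2)) := by
  rw [← measure_inter_add_diff S (measurableSet_Iio (a := (1/2:ℝ)))]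
  congr 1
  rw [Set.diff_eq, Set.compl_Iio]

lemma volM0 (u : ℝ) : volume ({x : ℝ | pdF 0 x ≤ u} ∩ Set.Ioo 0 1) =
    ENNReal.ofReal (min u 1) := by
  have h := vol_between (a := (0:ℝ)) (b := min u 1)
    (s := {x : ℝ | pdF 0 x ≤ u} ∩ Set.Ioo 0 1) ?_ ?_
  · rw [h]; congr 1; ring
  · rintro x ⟨hx0, hx1⟩
    have h1 : x < u := hx1.trans_le (min_le_left _ _)
    have h2 : x < 1 := hx1.trans_le (min_le_right _ _)
    exact ⟨by simpa using h1.le, hx0, h2⟩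
  · rintro x ⟨hxu, hx0, hx1⟩
    simp only [Set.mem_setOf_eq, pdF0] at hxu
    exact ⟨hx0.le, le_min hxu hx1.le⟩

lemma volM1 (u : ℝ) : volume ({x : ℝ | pdF 1 x ≤ u} ∩ Set.Ioo 0 1) =
    ENNReal.ofReal (min (u - 1/2) (1/2)) + ENNReal.ofReal (min (u + 1/2) 1 - 1/2) := by
  rw [vol_split]
  congr 1
  · have h := vol_between (a := (0:ℝ)) (b := min (u - 1/2) (1/2))
      (s := ({x : ℝ | pdF 1 x ≤ u} ∩ Set.Ioo 0 1) ∩ Set.Iio (1/2)) ?_ ?_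
    · rw [h]; congr 1; ring
    · rintro x ⟨hx0, hx1⟩
      have h1 : x < u - 1/2 := hx1.trans_le (min_le_left _ _)
      have h2 : x < 1/2 := hx1.trans_le (min_le_right _ _)
      refine ⟨⟨?_, hx0, by linarith⟩, h2⟩
      simp only [Set.mem_setOf_eq, pdF1]
      rw [fract_half_lo hx0.le h2]; linarith
    · rintro x ⟨⟨hxu, hx0, hx1⟩, hxh⟩
      simp only [Set.mem_setOf_eq, pdF1] at hxu
      rw [fract_half_lo hx0.le hxh] at hxu
      exact ⟨hx0.le, le_min (by linarith) hxh.le⟩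
  · have h := vol_between (a := (1:ℝ)/2) (b := min (u + 1/2) 1)
      (s := ({x : ℝ | pdF 1 x ≤ u} ∩ Set.Ioo 0 1) ∩ Set.Ici (1/2)) ?_ ?_
    · rw [h]
    · rintro x ⟨hx0, hx1⟩
      have h1 : x < u + 1/2 := hx1.trans_le (min_le_left _ _)
      have h2 : x < 1 := hx1.trans_le (min_le_right _ _)
      refine ⟨⟨?_, by linarith, h2⟩, hx0.le⟩
      simp only [Set.mem_setOf_eq, pdF1]
      rw [fract_half_hi hx0.le h2]; linarith
    · rintro x ⟨⟨hxu, hx0, hx1⟩, hxh⟩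
      simp only [Set.mem_setOf_eq, pdF1] at hxu
      rw [fract_half_hi hxh hx1] at hxu
      exact ⟨hxh, le_min (by linarith) hx1.le⟩

lemma volM2 (u : ℝ) : volume ({x : ℝ | pdF 2 x ≤ u} ∩ Set.Ioo 0 1) =
    ENNReal.ofReal (1/2 - max ((1 - u)/2) 0) + ENNReal.ofReal (1 - max (1 - u/2) (1/2)) := by
  rw [vol_split]
  congr 1
  · have h := vol_between (a := max ((1 - u)/2) 0) (b := (1:ℝ)/2)
      (s := ({x : ℝ | pdF 2 x ≤ u} ∩ Set.Ioo 0 1) ∩ Set.Iio (1/2)) ?_ ?_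
    · rw [h]
    · rintro x ⟨hx0, hx1⟩
      have h1 : (1 - u)/2 < x := (le_max_left _ _).trans_lt hx0
      have h2 : 0 < x := (le_max_right _ _).trans_lt hx0
      refine ⟨⟨?_, h2, by linarith⟩, hx1⟩
      simp only [Set.mem_setOf_eq, pdF2]
      rw [fract_two_lo h2.le hx1]; linarith
    · rintro x ⟨⟨hxu, hx0, hx1⟩, hxh⟩
      simp only [Set.mem_setOf_eq, pdF2] at hxu
      rw [fract_two_lo hx0.le hxh] at hxu
      exact ⟨max_le (by linarith) hx0.le, hxh.le⟩
  · have h := vol_between (a := max (1 - u/2) (1/2)) (b := (1:ℝ))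
      (s := ({x : ℝ | pdF 2 x ≤ u} ∩ Set.Ioo 0 1) ∩ Set.Ici (1/2)) ?_ ?_
    · rw [h]
    · rintro x ⟨hx0, hx1⟩
      have h1 : 1 - u/2 < x := (le_max_left _ _).trans_lt hx0
      have h2 : 1/2 < x := (le_max_right _ _).trans_lt hx0
      refine ⟨⟨?_, by linarith, hx1⟩, h2.le⟩
      simp only [Set.mem_setOf_eq, pdF2]
      rw [fract_two_hi h2.le hx1]; linarith
    · rintro x ⟨⟨hxu, hx0, hx1⟩, hxh⟩
      simp only [Set.mem_setOf_eq, pdF2] at hxu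
      rw [fract_two_hi hxh hx1] at hxu
      exact ⟨max_le (by linarith) hxh, hx1.le⟩

lemma volJ01 (u v : ℝ) :
    volume ({x : ℝ | pdF 0 x ≤ u ∧ pdF 1 x ≤ v} ∩ Set.Ioo 0 1) =
    ENNReal.ofReal (min u (min (v - 1/2) (1/2))) +
      ENNReal.ofReal (min u (min (v + 1/2) 1) - 1/2) := by
  rw [vol_split]
  congr 1
  · have h := vol_between (a := (0:ℝ)) (b := min u (min (v - 1/2) (1/2)))
      (s := ({x : ℝ | pdF 0 x ≤ u ∧ pdF 1 x ≤ v} ∩ Set.Ioo 0 1) ∩ Set.Iio (1/2)) ?_ ?_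
    · rw [h]; congr 1; ring
    · rintro x ⟨hx0, hx1⟩
      have h1 : x < u := hx1.trans_le (min_le_left _ _)
      have h2 : x < v - 1/2 := hx1.trans_le ((min_le_right _ _).trans (min_le_left _ _))
      have h3 : x < 1/2 := hx1.trans_le ((min_le_right _ _).trans (min_le_right _ _))
      refine ⟨⟨⟨by simpa using h1.le, ?_⟩, hx0, by linarith⟩, h3⟩
      simp only [Set.mem_setOf_eq, pdF1]
      rw [fract_half_lo hx0.le h3]; linarith
    · rintro x ⟨⟨⟨hxu, hxv⟩, hx0, hx1⟩, hxh⟩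
      simp only [pdF0] at hxu
      simp only [pdF1] at hxv
      rw [fract_half_lo hx0.le hxh] at hxv
      exact ⟨hx0.le, le_min hxu (le_min (by linarith) hxh.le)⟩
  · have h := vol_between (a := (1:ℝ)/2) (b := min u (min (v + 1/2) 1))
      (s := ({x : ℝ | pdF 0 x ≤ u ∧ pdF 1 x ≤ v} ∩ Set.Ioo 0 1) ∩ Set.Ici (1/2)) ?_ ?_
    · rw [h]
    · rintro x ⟨hx0, hx1⟩
      have h1 : x < u := hx1.trans_le (min_le_left _ _)
      have h2 : x < v + 1/2 := hx1.trans_le ((min_le_right _ _).trans (min_le_left _ _))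
      have h3 : x < 1 := hx1.trans_le ((min_le_right _ _).trans (min_le_right _ _))
      refine ⟨⟨⟨by simpa using h1.le, ?_⟩, by linarith, h3⟩, hx0.le⟩
      simp only [Set.mem_setOf_eq, pdF1]
      rw [fract_half_hi hx0.le h3]; linarith
    · rintro x ⟨⟨⟨hxu, hxv⟩, hx0, hx1⟩, hxh⟩
      simp only [pdF0] at hxu
      simp only [pdF1] at hxv
      rw [fract_half_hi hxh hx1] at hxv
      exact ⟨hxh, le_min hxu (le_min (by linarith) hx1.le)⟩

lemma volJ02 (u v : ℝ) :
    volume ({x : ℝ | pdF 0 x ≤ u ∧ pdF 2 x ≤ v} ∩ Set.Ioo 0 1) =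
    ENNReal.ofReal (min u (1/2) - max ((1 - v)/2) 0) +
      ENNReal.ofReal (min u 1 - max (1 - v/2) (1/2)) := by
  rw [vol_split]
  congr 1
  · have h := vol_between (a := max ((1 - v)/2) 0) (b := min u (1/2))
      (s := ({x : ℝ | pdF 0 x ≤ u ∧ pdF 2 x ≤ v} ∩ Set.Ioo 0 1) ∩ Set.Iio (1/2)) ?_ ?_
    · rw [h]
    · rintro x ⟨hx0, hx1⟩
      have h1 : (1 - v)/2 < x := (le_max_left _ _).trans_lt hx0
      have h2 : 0 < x := (le_max_right _ _).trans_lt hx0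
      have h3 : x < u := hx1.trans_le (min_le_left _ _)
      have h4 : x < 1/2 := hx1.trans_le (min_le_right _ _)
      refine ⟨⟨⟨by simpa using h3.le, ?_⟩, h2, by linarith⟩, h4⟩
      simp only [Set.mem_setOf_eq, pdF2]
      rw [fract_two_lo h2.le h4]; linarith
    · rintro x ⟨⟨⟨hxu, hxv⟩, hx0, hx1⟩, hxh⟩
      simp only [pdF0] at hxu
      simp only [pdF2] at hxv
      rw [fract_two_lo hx0.le hxh] at hxv
      exact ⟨max_le (by linarith) hx0.le, le_min hxu hxh.le⟩
  · have h := vol_between (a := max (1 - v/2) (1/2)) (b := min u 1)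
      (s := ({x : ℝ | pdF 0 x ≤ u ∧ pdF 2 x ≤ v} ∩ Set.Ioo 0 1) ∩ Set.Ici (1/2)) ?_ ?_
    · rw [h]
    · rintro x ⟨hx0, hx1⟩
      have h1 : 1 - v/2 < x := (le_max_left _ _).trans_lt hx0
      have h2 : 1/2 < x := (le_max_right _ _).trans_lt hx0
      have h3 : x < u := hx1.trans_le (min_le_left _ _)
      have h4 : x < 1 := hx1.trans_le (min_le_right _ _)
      refine ⟨⟨⟨by simpa using h3.le, ?_⟩, by linarith, h4⟩, h2.le⟩
      simp only [Set.mem_setOf_eq, pdF2]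
      rw [fract_two_hi h2.le h4]; linarith
    · rintro x ⟨⟨⟨hxu, hxv⟩, hx0, hx1⟩, hxh⟩
      simp only [pdF0] at hxu
      simp only [pdF2] at hxv
      rw [fract_two_hi hxh hx1] at hxv
      exact ⟨max_le (by linarith) hxh, le_min hxu hx1.le⟩

lemma volJ12 (u v : ℝ) :
    volume ({x : ℝ | pdF 1 x ≤ u ∧ pdF 2 x ≤ v} ∩ Set.Ioo 0 1) =
    ENNReal.ofReal (min (u - 1/2) (1/2) - max ((1 - v)/2) 0) +
      ENNReal.ofReal (min (u + 1/2) 1 - max (1 - v/2) (1/2)) := by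
  rw [vol_split]
  congr 1
  · have h := vol_between (a := max ((1 - v)/2) 0) (b := min (u - 1/2) (1/2))
      (s := ({x : ℝ | pdF 1 x ≤ u ∧ pdF 2 x ≤ v} ∩ Set.Ioo 0 1) ∩ Set.Iio (1/2)) ?_ ?_
    · rw [h]
    · rintro x ⟨hx0, hx1⟩
      have h1 : (1 - v)/2 < x := (le_max_left _ _).trans_lt hx0
      have h2 : 0 < x := (le_max_right _ _).trans_lt hx0
      have h3 : x < u - 1/2 := hx1.trans_le (min_le_left _ _)
      have h4 : x < 1/2 := hx1.trans_le (min_le_right _ _)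
      refine ⟨⟨⟨?_, ?_⟩, h2, by linarith⟩, h4⟩
      · simp only [Set.mem_setOf_eq, pdF1]
        rw [fract_half_lo h2.le h4]; linarith
      · simp only [Set.mem_setOf_eq, pdF2]
        rw [fract_two_lo h2.le h4]; linarith
    · rintro x ⟨⟨⟨hxu, hxv⟩, hx0, hx1⟩, hxh⟩
      simp only [pdF1] at hxu
      simp only [pdF2] at hxv
      rw [fract_half_lo hx0.le hxh] at hxu
      rw [fract_two_lo hx0.le hxh] at hxv
      exact ⟨max_le (by linarith) hx0.le, le_min (by linarith) hxh.le⟩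
  · have h := vol_between (a := max (1 - v/2) (1/2)) (b := min (u + 1/2) 1)
      (s := ({x : ℝ | pdF 1 x ≤ u ∧ pdF 2 x ≤ v} ∩ Set.Ioo 0 1) ∩ Set.Ici (1/2)) ?_ ?_
    · rw [h]
    · rintro x ⟨hx0, hx1⟩
      have h1 : 1 - v/2 < x := (le_max_left _ _).trans_lt hx0
      have h2 : 1/2 < x := (le_max_right _ _).trans_lt hx0
      have h3 : x < u + 1/2 := hx1.trans_le (min_le_left _ _)
      have h4 : x < 1 := hx1.trans_le (min_le_right _ _)
      refine ⟨⟨⟨?_, ?_⟩, by linarith, h4⟩, h2.le⟩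
      · simp only [Set.mem_setOf_eq, pdF1]
        rw [fract_half_hi h2.le h4]; linarith
      · simp only [Set.mem_setOf_eq, pdF2]
        rw [fract_two_hi h2.le h4]; linarith
    · rintro x ⟨⟨⟨hxu, hxv⟩, hx0, hx1⟩, hxh⟩
      simp only [pdF1] at hxu
      simp only [pdF2] at hxv
      rw [fract_half_hi hxh hx1] at hxu
      rw [fract_two_hi hxh hx1] at hxv
      exact ⟨max_le (by linarith) hxh, le_min (by linarith) hx1.le⟩


lemma pdF_meas (k : Fin 3) : Measurable (pdF k) := by
  fin_cases k
  · exact measurable_id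
  · exact (measurable_id.add_const _).fract
  · exact measurable_const.sub (measurable_const.mul measurable_id).fract


lemma ofReal_max0 (e : ℝ) : ENNReal.ofReal e = ENNReal.ofReal (max e 0) := by
  rcases le_total e 0 with h | h
  · simp [ENNReal.ofReal_eq_zero.2 h, max_eq_right h]
  · rw [max_eq_left h]

lemma merge2 {a b : ℝ} (ha : 0 ≤ a) (hb : 0 ≤ b) :
    ENNReal.ofReal a + ENNReal.ofReal b = ENNReal.ofReal (a + b) :=
  (ENNReal.ofReal_add ha hb).symm

lemma h6inv : (6 : ENNReal)⁻¹ = ENNReal.ofReal (1/6) := by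
  rw [show (1:ℝ)/6 = (6:ℝ)⁻¹ by norm_num,
    ENNReal.ofReal_inv_of_pos (by norm_num : (0:ℝ) < 6), ENNReal.ofReal_ofNat]

lemma pd_key {Ω : Type*} [MeasurableSpace Ω] (μ : Measure Ω) [IsProbabilityMeasure μ]
    (r : Ω → ℝ) (hr : Measurable r)
    (hrlaw : μ.map r = volume.restrict (Set.Ioo (0 : ℝ) 1))
    (σ : Ω → Equiv.Perm (Fin 3))
    (hσ : ∀ (π : Equiv.Perm (Fin 3)) (s : Set ℝ), MeasurableSet s →
      μ ({ω | σ ω = π} ∩ r ⁻¹' s) = (6 : ENNReal)⁻¹ * μ (r ⁻¹' s))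
    (s : Equiv.Perm (Fin 3) → Set ℝ) (hs : ∀ π, MeasurableSet (s π)) :
    μ {ω | r ω ∈ s (σ ω)} =
      ∑ π : Equiv.Perm (Fin 3), (6 : ENNReal)⁻¹ * volume (s π ∩ Set.Ioo 0 1) := by
  have hmap : ∀ t : Set ℝ, MeasurableSet t → μ (r ⁻¹' t) = volume (t ∩ Set.Ioo 0 1) := by
    intro t ht
    rw [← Measure.map_apply hr ht, hrlaw, Measure.restrict_apply ht]
  have ub : ∀ t : Equiv.Perm (Fin 3) → Set ℝ, (∀ π, MeasurableSet (t π)) →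
      μ {ω | r ω ∈ t (σ ω)} ≤
        ∑ π : Equiv.Perm (Fin 3), (6 : ENNReal)⁻¹ * volume (t π ∩ Set.Ioo 0 1) := by
    intro t ht
    have hE : {ω | r ω ∈ t (σ ω)} = ⋃ π, ({ω | σ ω = π} ∩ r ⁻¹' (t π)) := by
      ext ω
      simp only [Set.mem_setOf_eq, Set.mem_iUnion, Set.mem_inter_iff, Set.mem_preimage]
      exact ⟨fun h => ⟨σ ω, rfl, h⟩, fun ⟨π, hπ, h⟩ => hπ ▸ h⟩
    rw [hE]
    refine (measure_iUnion_le _).trans ?_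
    rw [tsum_fintype]
    exact le_of_eq (Finset.sum_congr rfl fun π _ => by
      rw [hσ π _ (ht π), hmap _ (ht π)])
  refine le_antisymm (ub s hs) ?_
  set E := {ω | r ω ∈ s (σ ω)} with hEdef
  set c := ∑ π : Equiv.Perm (Fin 3), (6 : ENNReal)⁻¹ * volume (s π ∩ Set.Ioo 0 1) with hc
  set d := ∑ π : Equiv.Perm (Fin 3), (6 : ENNReal)⁻¹ * volume ((s π)ᶜ ∩ Set.Ioo 0 1) with hd
  have hEc : μ Eᶜ ≤ d := by
    have h1 := ub (fun π => (s π)ᶜ) (fun π => (hs π).compl)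
    have hcompl : {ω | r ω ∈ (s (σ ω))ᶜ} = Eᶜ := by
      ext ω; simp [hEdef]
    rw [hcompl] at h1
    exact h1
  have hvol1 : ∀ π : Equiv.Perm (Fin 3),
      volume (s π ∩ Set.Ioo (0:ℝ) 1) + volume ((s π)ᶜ ∩ Set.Ioo (0:ℝ) 1) = 1 := by
    intro π
    rw [← Measure.restrict_apply (hs π), ← Measure.restrict_apply (hs π).compl,
      measure_add_measure_compl (hs π), Measure.restrict_apply_univ, Real.volume_Ioo]
    norm_num
  have hcd : c + d = 1 := by
    rw [hc, hd, ← Finset.sum_add_distrib]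
    have : ∀ π : Equiv.Perm (Fin 3), (6 : ENNReal)⁻¹ * volume (s π ∩ Set.Ioo 0 1) +
        (6 : ENNReal)⁻¹ * volume ((s π)ᶜ ∩ Set.Ioo 0 1) = (6 : ENNReal)⁻¹ := by
      intro π
      rw [← mul_add, hvol1 π, mul_one]
    rw [Finset.sum_congr rfl fun π _ => this π, Finset.sum_const, Finset.card_univ,
      Fintype.card_perm]
    simp only [Fintype.card_fin, nsmul_eq_mul]
    rw [show ((Nat.factorial 3 : ℕ) : ENNReal) = 6 by norm_num [Nat.factorial]]
    exact ENNReal.mul_inv_cancel (by norm_num) (by norm_num)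
  have h2 : (1 : ENNReal) ≤ μ E + μ Eᶜ := by
    have h3 := measure_union_le (μ := μ) E Eᶜ
    rw [Set.union_compl_self, measure_univ] at h3
    exact h3
  have hd1 : d ≠ ⊤ := by
    have : d ≤ c + d := le_add_self
    rw [hcd] at this
    exact (this.trans_lt ENNReal.one_lt_top).ne
  have : c + d ≤ μ E + d := by
    rw [hcd]
    exact h2.trans (add_le_add (le_refl _) hEc)
  exact (ENNReal.add_le_add_iff_right hd1).mp this


def pdP : Fin 6 → Equiv.Perm (Fin 3) :=
  ![1, Equiv.swap 0 1, Equiv.swap 0 2, Equiv.swap 1 2,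
    Equiv.swap 0 1 * Equiv.swap 1 2, Equiv.swap 1 2 * Equiv.swap 0 1]

lemma pdP_bij : Function.Bijective pdP := by decide

lemma pdPe0 : pdP 0 = 1 := rfl
lemma pdPe1 : pdP 1 = Equiv.swap 0 1 := rfl
lemma pdPe2 : pdP 2 = Equiv.swap 0 2 := rfl
lemma pdPe3 : pdP 3 = Equiv.swap 1 2 := rfl
lemma pdPe4 : pdP 4 = Equiv.swap 0 1 * Equiv.swap 1 2 := rfl
lemma pdPe5 : pdP 5 = Equiv.swap 1 2 * Equiv.swap 0 1 := rfl

lemma sum_perm (g : Equiv.Perm (Fin 3) → ENNReal) :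
    ∑ π : Equiv.Perm (Fin 3), g π =
      g (pdP 0) + g (pdP 1) + g (pdP 2) + g (pdP 3) + g (pdP 4) + g (pdP 5) := by
  rw [← Fintype.sum_bijective pdP pdP_bij (fun k => g (pdP k)) g (fun k => rfl)]
  rw [Fin.sum_univ_six]

lemma sum_perm_pair (g : Fin 3 → Fin 3 → ENNReal) {i j : Fin 3} (hij : i ≠ j) :
    ∑ π : Equiv.Perm (Fin 3), g (π i) (π j) =
      g 0 1 + g 1 0 + g 0 2 + g 2 0 + g 1 2 + g 2 1 := by
  rw [sum_perm (fun π => g (π i) (π j))]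
  fin_cases i <;> fin_cases j <;>
    simp_all (config := { decide := true })
      [pdPe0, pdPe1, pdPe2, pdPe3, pdPe4, pdPe5, Equiv.swap_apply_def] <;> ring

lemma sum_perm_single (g : Fin 3 → ENNReal) (i : Fin 3) :
    ∑ π : Equiv.Perm (Fin 3), g (π i) = g 0 + g 0 + g 1 + g 1 + g 2 + g 2 := by
  rw [sum_perm (fun π => g (π i))]
  fin_cases i <;>
    simp_all (config := { decide := true })
      [pdPe0, pdPe1, pdPe2, pdPe3, pdPe4, pdPe5, Equiv.swap_apply_def] <;> ring

set_option maxHeartbeats 2000000 in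
lemma pd_core_ineq (u v : ℝ) (huv : u ≤ v) :
    max (min u (min (v - 1/2) (1/2))) 0 + max (min u (min (v + 1/2) 1) - 1/2) 0 +
    (max (min v (min (u - 1/2) (1/2))) 0 + max (min v (min (u + 1/2) 1) - 1/2) 0) +
    (max (min u (1/2) - max ((1 - v)/2) 0) 0 + max (min u 1 - max (1 - v/2) (1/2)) 0) +
    (max (min v (1/2) - max ((1 - u)/2) 0) 0 + max (min v 1 - max (1 - u/2) (1/2)) 0) +
    (max (min (u - 1/2) (1/2) - max ((1 - v)/2) 0) 0 +
      max (min (u + 1/2) 1 - max (1 - v/2) (1/2)) 0) +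
    (max (min (v - 1/2) (1/2) - max ((1 - u)/2) 0) 0 +
      max (min (v + 1/2) 1 - max (1 - u/2) (1/2)) 0)
    ≤ 6 * (max (min u 1) 0 * max (min v 1) 0) := by
  have hRnn : 0 ≤ 6 * (max (min u 1) 0 * max (min v 1) 0) := by positivity
  rcases le_total u 0 with hu0 | hu0
  · -- u ≤ 0 : every term vanishes
    have z1 : max (min u (min (v - 1/2) (1/2))) 0 = 0 :=
      max_eq_right ((min_le_left _ _).trans hu0)
    have z2 : max (min u (min (v + 1/2) 1) - 1/2) 0 = 0 :=
      max_eq_right (by have := min_le_left u (min (v + 1/2) 1); linarith)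
    have z3 : max (min v (min (u - 1/2) (1/2))) 0 = 0 :=
      max_eq_right (by
        have := (min_le_right v (min (u - 1/2) (1/2))).trans (min_le_left _ _); linarith)
    have z4 : max (min v (min (u + 1/2) 1) - 1/2) 0 = 0 :=
      max_eq_right (by
        have := (min_le_right v (min (u + 1/2) 1)).trans (min_le_left _ _); linarith)
    have z5 : max (min u (1/2) - max ((1 - v)/2) 0) 0 = 0 :=
      max_eq_right (by
        have h1 := min_le_left u (1/2 : ℝ)
        have h2 := le_max_right ((1 - v)/2) (0:ℝ); linarith)
    have z6 : max (min u 1 - max (1 - v/2) (1/2)) 0 = 0 :=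
      max_eq_right (by
        have h1 := min_le_left u (1:ℝ)
        have h2 := le_max_right (1 - v/2) (1/2 : ℝ); linarith)
    have z7 : max (min v (1/2) - max ((1 - u)/2) 0) 0 = 0 :=
      max_eq_right (by
        have h1 := min_le_right v (1/2 : ℝ)
        have h2 := le_max_left ((1 - u)/2) (0:ℝ); linarith)
    have z8 : max (min v 1 - max (1 - u/2) (1/2)) 0 = 0 :=
      max_eq_right (by
        have h1 := min_le_right v (1:ℝ)
        have h2 := le_max_left (1 - u/2) (1/2 : ℝ); linarith)
    have z9 : max (min (u - 1/2) (1/2) - max ((1 - v)/2) 0) 0 = 0 :=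
      max_eq_right (by
        have h1 := min_le_left (u - 1/2) (1/2 : ℝ)
        have h2 := le_max_right ((1 - v)/2) (0:ℝ); linarith)
    have z10 : max (min (u + 1/2) 1 - max (1 - v/2) (1/2)) 0 = 0 :=
      max_eq_right (by
        have h1 := min_le_left (u + 1/2) (1:ℝ)
        have h2 := le_max_right (1 - v/2) (1/2 : ℝ); linarith)
    have z11 : max (min (v - 1/2) (1/2) - max ((1 - u)/2) 0) 0 = 0 :=
      max_eq_right (by
        have h1 := min_le_right (v - 1/2) (1/2 : ℝ)
        have h2 := le_max_left ((1 - u)/2) (0:ℝ); linarith)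
    have z12 : max (min (v + 1/2) 1 - max (1 - u/2) (1/2)) 0 = 0 :=
      max_eq_right (by
        have h1 := min_le_right (v + 1/2) (1:ℝ)
        have h2 := le_max_left (1 - u/2) (1/2 : ℝ); linarith)
    rw [z1, z2, z3, z4, z5, z6, z7, z8, z9, z10, z11, z12]
    linarith
  · have hv0 : 0 ≤ v := hu0.trans huv
    rcases le_total 1 u with hu1 | hu1
    · -- 1 ≤ u ≤ v : everything saturates, each term is 1/2
      have hv1 : 1 ≤ v := hu1.trans huv
      rw [min_eq_right (by linarith : (1:ℝ)/2 ≤ v - 1/2),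
        min_eq_right (by linarith : (1:ℝ) ≤ v + 1/2),
        min_eq_right (by linarith : (1:ℝ)/2 ≤ u - 1/2),
        min_eq_right (by linarith : (1:ℝ) ≤ u + 1/2),
        min_eq_right (by linarith : (1:ℝ)/2 ≤ u),
        min_eq_right (hu1 : (1:ℝ) ≤ u),
        min_eq_right (by linarith : (1:ℝ)/2 ≤ v),
        min_eq_right (hv1 : (1:ℝ) ≤ v),
        max_eq_right (by linarith : (1 - v)/2 ≤ (0:ℝ)),
        max_eq_right (by linarith : 1 - v/2 ≤ (1:ℝ)/2),
        max_eq_right (by linarith : (1 - u)/2 ≤ (0:ℝ)),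
        max_eq_right (by linarith : 1 - u/2 ≤ (1:ℝ)/2)]
      norm_num
    · rcases le_total 1 v with hv1 | hv1
      · -- 0 ≤ u ≤ 1 ≤ v
        rw [min_eq_right (by linarith : (1:ℝ)/2 ≤ v - 1/2),
          min_eq_right (by linarith : (1:ℝ) ≤ v + 1/2),
          min_eq_left (by linarith : u - 1/2 ≤ (1:ℝ)/2),
          min_eq_left (hu1 : u ≤ (1:ℝ)),
          min_eq_right (by linarith : (1:ℝ)/2 ≤ v),
          min_eq_right (hv1 : (1:ℝ) ≤ v),
          max_eq_right (by linarith : (1 - v)/2 ≤ (0:ℝ)),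
          max_eq_right (by linarith : 1 - v/2 ≤ (1:ℝ)/2),
          max_eq_left (by linarith : (0:ℝ) ≤ (1 - u)/2),
          max_eq_left (by linarith : (1:ℝ)/2 ≤ 1 - u/2),
          min_eq_right (by linarith : u - 1/2 ≤ v)]
        rcases le_total u (1/2) with huh | huh
        · rw [min_eq_left (by linarith : u + 1/2 ≤ (1:ℝ)),
            min_eq_left (huh : u ≤ (1:ℝ)/2),
            min_eq_right (by linarith : u + 1/2 ≤ v),
            max_eq_left (hu0 : (0:ℝ) ≤ u),
            max_eq_right (by linarith : u - 1/2 ≤ (0:ℝ)),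
            max_eq_left (by linarith : (0:ℝ) ≤ u + 1/2 - 1/2),
            max_eq_left (by linarith : (0:ℝ) ≤ u - 0),
            max_eq_left (by linarith : (0:ℝ) ≤ 1/2 - (1 - u)/2),
            max_eq_left (by linarith : (0:ℝ) ≤ 1 - (1 - u/2)),
            max_eq_right (by linarith : u - 1/2 - 0 ≤ (0:ℝ)),
            max_eq_left (by norm_num : (0:ℝ) ≤ (1:ℝ))]
          nlinarith [mul_one u]
        · rw [min_eq_right (by linarith : (1:ℝ) ≤ u + 1/2),
            min_eq_right (huh : (1:ℝ)/2 ≤ u),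
            min_eq_right (hv1 : (1:ℝ) ≤ v),
            max_eq_left (by norm_num : (0:ℝ) ≤ (1:ℝ)/2),
            max_eq_left (by linarith : (0:ℝ) ≤ u - 1/2),
            max_eq_left (by norm_num : (0:ℝ) ≤ 1 - (1:ℝ)/2),
            max_eq_left (by norm_num : (0:ℝ) ≤ 1/2 - (0:ℝ)),
            max_eq_left (by linarith : (0:ℝ) ≤ 1/2 - (1 - u)/2),
            max_eq_left (by linarith : (0:ℝ) ≤ 1 - (1 - u/2)),
            max_eq_left (by linarith : (0:ℝ) ≤ u - 1/2 - 0),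
            max_eq_left (by norm_num : (0:ℝ) ≤ (1:ℝ)),
            max_eq_left hu0]
          nlinarith [mul_one u]
      · -- main square 0 ≤ u ≤ v ≤ 1
        rw [min_eq_left (by linarith : v - 1/2 ≤ (1:ℝ)/2),
          min_eq_left (by linarith : u - 1/2 ≤ (1:ℝ)/2),
          max_eq_left (by linarith : (0:ℝ) ≤ (1 - v)/2),
          max_eq_left (by linarith : (0:ℝ) ≤ (1 - u)/2),
          max_eq_left (by linarith : (1:ℝ)/2 ≤ 1 - v/2),
          max_eq_left (by linarith : (1:ℝ)/2 ≤ 1 - u/2),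
          min_eq_right (by linarith : u - 1/2 ≤ v)]
        rcases le_total v (1/2) with hvh | hvh
        · -- region A : 0 ≤ u ≤ v ≤ 1/2
          rw [min_eq_left (by linarith : v + 1/2 ≤ (1:ℝ)),
            min_eq_left (by linarith : u + 1/2 ≤ (1:ℝ)),
            min_eq_right (by linarith : v - 1/2 ≤ u),
            min_eq_left (by linarith : u ≤ v + 1/2),
            min_eq_left (by linarith : v ≤ u + 1/2),
            min_eq_left (by linarith : u ≤ (1:ℝ)/2),
            min_eq_left (hvh : v ≤ (1:ℝ)/2),
            min_eq_left (by linarith : u ≤ (1:ℝ)),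
            min_eq_left (by linarith : v ≤ (1:ℝ)),
            max_eq_right (by linarith : v - 1/2 ≤ (0:ℝ)),
            max_eq_right (by linarith : u - 1/2 ≤ (0:ℝ)),
            max_eq_right (by linarith : u - (1 - v/2) ≤ (0:ℝ)),
            max_eq_right (by linarith : v - (1 - u/2) ≤ (0:ℝ)),
            max_eq_right (by linarith : u - 1/2 - (1 - v)/2 ≤ (0:ℝ)),
            max_eq_right (by linarith : v - 1/2 - (1 - u)/2 ≤ (0:ℝ)),
            max_eq_left hu0, max_eq_left hv0]
          rcases le_total (u + v/2) (1/2) with sA | sA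
          · rw [max_eq_right (by linarith : u - (1 - v)/2 ≤ (0:ℝ)),
              max_eq_right (by linarith : u + 1/2 - (1 - v/2) ≤ (0:ℝ))]
            rcases le_total (v + u/2) (1/2) with sB | sB
            · rw [max_eq_right (by linarith : v - (1 - u)/2 ≤ (0:ℝ)),
                max_eq_right (by linarith : v + 1/2 - (1 - u/2) ≤ (0:ℝ))]
              nlinarith [mul_nonneg hu0 hv0]
            · rw [max_eq_left (by linarith : (0:ℝ) ≤ v - (1 - u)/2),
                max_eq_left (by linarith : (0:ℝ) ≤ v + 1/2 - (1 - u/2))]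
              nlinarith [mul_nonneg (by linarith : (0:ℝ) ≤ 1 - 2*v)
                (by linarith : (0:ℝ) ≤ 1 - u), mul_nonneg hu0 hv0]
          · have sB : (1:ℝ)/2 ≤ v + u/2 := by linarith
            rw [max_eq_left (by linarith : (0:ℝ) ≤ u - (1 - v)/2),
              max_eq_left (by linarith : (0:ℝ) ≤ u + 1/2 - (1 - v/2)),
              max_eq_left (by linarith : (0:ℝ) ≤ v - (1 - u)/2),
              max_eq_left (by linarith : (0:ℝ) ≤ v + 1/2 - (1 - u/2))]
            nlinarith [mul_nonneg (by linarith : (0:ℝ) ≤ 1 - 2*u)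
              (by linarith : (0:ℝ) ≤ 1 - 2*v)]
        · rcases le_total (1/2) u with huh | huh
          · -- region D : 1/2 ≤ u ≤ v ≤ 1
            rw [min_eq_right (by linarith : (1:ℝ) ≤ v + 1/2),
              min_eq_right (by linarith : (1:ℝ) ≤ u + 1/2),
              min_eq_left (by linarith : u ≤ (1:ℝ)),
              min_eq_left (by linarith : v ≤ (1:ℝ)),
              min_eq_right (by linarith : v - 1/2 ≤ u),
              min_eq_right (huh : (1:ℝ)/2 ≤ u),
              min_eq_right (by linarith : (1:ℝ)/2 ≤ v),
              max_eq_left (by linarith : (0:ℝ) ≤ v - 1/2),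
              max_eq_left (by linarith : (0:ℝ) ≤ u - 1/2),
              max_eq_left (by linarith : (0:ℝ) ≤ 1/2 - (1 - v)/2),
              max_eq_left (by linarith : (0:ℝ) ≤ 1/2 - (1 - u)/2),
              max_eq_left (by linarith : (0:ℝ) ≤ 1 - (1 - v/2)),
              max_eq_left (by linarith : (0:ℝ) ≤ 1 - (1 - u/2)),
              max_eq_left hu0, max_eq_left hv0]
            rcases le_total (u + v/2) 1 with sP | sP
            · rw [max_eq_right (by linarith : u - (1 - v/2) ≤ (0:ℝ)),
                max_eq_right (by linarith : u - 1/2 - (1 - v)/2 ≤ (0:ℝ))]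
              rcases le_total (v + u/2) 1 with sQ | sQ
              · rw [max_eq_right (by linarith : v - (1 - u/2) ≤ (0:ℝ)),
                  max_eq_right (by linarith : v - 1/2 - (1 - u)/2 ≤ (0:ℝ))]
                nlinarith [mul_nonneg (by linarith : (0:ℝ) ≤ 2*u - 1)
                  (by linarith : (0:ℝ) ≤ 2*v - 1)]
              · rw [max_eq_left (by linarith : (0:ℝ) ≤ v - (1 - u/2)),
                  max_eq_left (by linarith : (0:ℝ) ≤ v - 1/2 - (1 - u)/2)]
                have hv23 : (2:ℝ)/3 ≤ v := by linarith
                nlinarith [mul_nonneg (by linarith : (0:ℝ) ≤ 2*u - 1)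
                  (by linarith : (0:ℝ) ≤ 3*v - 2),
                  mul_nonneg (by linarith : (0:ℝ) ≤ 2*u - 1)
                  (by linarith : (0:ℝ) ≤ 1 - v)]
            · have sQ : (1:ℝ) ≤ v + u/2 := by linarith
              rw [max_eq_left (by linarith : (0:ℝ) ≤ u - (1 - v/2)),
                max_eq_left (by linarith : (0:ℝ) ≤ u - 1/2 - (1 - v)/2),
                max_eq_left (by linarith : (0:ℝ) ≤ v - (1 - u/2)),
                max_eq_left (by linarith : (0:ℝ) ≤ v - 1/2 - (1 - u)/2)]
              nlinarith [mul_nonneg (by linarith : (0:ℝ) ≤ 1 - u)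
                (by linarith : (0:ℝ) ≤ 1 - v)]
          · -- regions B and C : 0 ≤ u ≤ 1/2 ≤ v ≤ 1
            rw [min_eq_right (by linarith : (1:ℝ) ≤ v + 1/2),
              min_eq_left (by linarith : u + 1/2 ≤ (1:ℝ)),
              min_eq_left (by linarith : u ≤ (1:ℝ)),
              min_eq_left (by linarith : v ≤ (1:ℝ)),
              min_eq_left (huh : u ≤ (1:ℝ)/2),
              min_eq_right (by linarith : (1:ℝ)/2 ≤ v),
              max_eq_left hu0, max_eq_left hv0,
              max_eq_right (by linarith : u - 1/2 ≤ (0:ℝ)),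
              max_eq_right (by linarith : u - (1 - v/2) ≤ (0:ℝ)),
              max_eq_right (by linarith : u - 1/2 - (1 - v)/2 ≤ (0:ℝ)),
              max_eq_left (by linarith : (0:ℝ) ≤ 1/2 - (1 - u)/2),
              max_eq_left (by linarith : (0:ℝ) ≤ 1 - (1 - u/2))]
            rcases le_total v (u + 1/2) with hvu | hvu
            · -- region B
              rw [min_eq_right (by linarith : v - 1/2 ≤ u),
                min_eq_left (hvu : v ≤ u + 1/2),
                max_eq_left (by linarith : (0:ℝ) ≤ v - 1/2)]
              rcases le_total (u + v/2) (1/2) with sA | sA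
              · rw [max_eq_right (by linarith : u - (1 - v)/2 ≤ (0:ℝ)),
                  max_eq_right (by linarith : u + 1/2 - (1 - v/2) ≤ (0:ℝ))]
                rcases le_total (v + u/2) 1 with sQ | sQ
                · rw [max_eq_right (by linarith : v - (1 - u/2) ≤ (0:ℝ)),
                    max_eq_right (by linarith : v - 1/2 - (1 - u)/2 ≤ (0:ℝ))]
                  nlinarith [mul_nonneg hu0 (by linarith : (0:ℝ) ≤ 2*v - 1)]
                · linarith
              · rw [max_eq_left (by linarith : (0:ℝ) ≤ u - (1 - v)/2),
                  max_eq_left (by linarith : (0:ℝ) ≤ u + 1/2 - (1 - v/2))]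
                rcases le_total (v + u/2) 1 with sQ | sQ
                · rw [max_eq_right (by linarith : v - (1 - u/2) ≤ (0:ℝ)),
                    max_eq_right (by linarith : v - 1/2 - (1 - u)/2 ≤ (0:ℝ))]
                  nlinarith [mul_nonneg (by linarith : (0:ℝ) ≤ 2*u - 2*v + 1)
                    (by linarith : (0:ℝ) ≤ 1 - 2*u), sq_nonneg (4*u - 1),
                    mul_nonneg (by linarith : (0:ℝ) ≤ 2*v - 1)
                    (by linarith : (0:ℝ) ≤ 1 - 2*u)]
                · rw [max_eq_left (by linarith : (0:ℝ) ≤ v - (1 - u/2)),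
                    max_eq_left (by linarith : (0:ℝ) ≤ v - 1/2 - (1 - u)/2)]
                  nlinarith [sq_nonneg (2*u - 1),
                    mul_nonneg (by linarith : (0:ℝ) ≤ 5 - 6*u)
                    (by linarith : (0:ℝ) ≤ u + 1/2 - v)]
            · -- region C
              rw [min_eq_left (by linarith : u ≤ v - 1/2),
                min_eq_right (hvu : u + 1/2 ≤ v),
                max_eq_left hu0,
                max_eq_left (by linarith : (0:ℝ) ≤ u + 1/2 - 1/2)]
              rcases le_total (u + v/2) (1/2) with sA | sA
              · rw [max_eq_right (by linarith : u - (1 - v)/2 ≤ (0:ℝ)),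
                  max_eq_right (by linarith : u + 1/2 - (1 - v/2) ≤ (0:ℝ))]
                rcases le_total (v + u/2) 1 with sQ | sQ
                · rw [max_eq_right (by linarith : v - (1 - u/2) ≤ (0:ℝ)),
                    max_eq_right (by linarith : v - 1/2 - (1 - u)/2 ≤ (0:ℝ))]
                  nlinarith [mul_nonneg hu0 (by linarith : (0:ℝ) ≤ 2*v - 1)]
                · rw [max_eq_left (by linarith : (0:ℝ) ≤ v - (1 - u/2)),
                    max_eq_left (by linarith : (0:ℝ) ≤ v - 1/2 - (1 - u)/2)]
                  nlinarith [mul_nonneg hu0 hv0,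
                    mul_nonneg hu0 (by linarith : (0:ℝ) ≤ 2*v - 1)]
              · rw [max_eq_left (by linarith : (0:ℝ) ≤ u - (1 - v)/2),
                  max_eq_left (by linarith : (0:ℝ) ≤ u + 1/2 - (1 - v/2))]
                rcases le_total (v + u/2) 1 with sQ | sQ
                · rw [max_eq_right (by linarith : v - (1 - u/2) ≤ (0:ℝ)),
                    max_eq_right (by linarith : v - 1/2 - (1 - u)/2 ≤ (0:ℝ))]
                  nlinarith [sq_nonneg (4*u - 1),
                    mul_nonneg (by linarith : (0:ℝ) ≤ v - u - 1/2)
                    (by linarith : (0:ℝ) ≤ 1 - u/2 - v),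
                    mul_nonneg hu0 (by linarith : (0:ℝ) ≤ 1 - 2*u)]
                · rw [max_eq_left (by linarith : (0:ℝ) ≤ v - (1 - u/2)),
                    max_eq_left (by linarith : (0:ℝ) ≤ v - 1/2 - (1 - u)/2)]
                  nlinarith [mul_nonneg (by linarith : (0:ℝ) ≤ 1 - v)
                    (by linarith : (0:ℝ) ≤ 1 - 2*u)]


lemma pd_real_ineq_full (u v : ℝ) :
    max (min u (min (v - 1/2) (1/2))) 0 + max (min u (min (v + 1/2) 1) - 1/2) 0 +
    (max (min v (min (u - 1/2) (1/2))) 0 + max (min v (min (u + 1/2) 1) - 1/2) 0) +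
    (max (min u (1/2) - max ((1 - v)/2) 0) 0 + max (min u 1 - max (1 - v/2) (1/2)) 0) +
    (max (min v (1/2) - max ((1 - u)/2) 0) 0 + max (min v 1 - max (1 - u/2) (1/2)) 0) +
    (max (min (u - 1/2) (1/2) - max ((1 - v)/2) 0) 0 +
      max (min (u + 1/2) 1 - max (1 - v/2) (1/2)) 0) +
    (max (min (v - 1/2) (1/2) - max ((1 - u)/2) 0) 0 +
      max (min (v + 1/2) 1 - max (1 - u/2) (1/2)) 0)
    ≤ 6 * (max (min u 1) 0 * max (min v 1) 0) := by
  rcases le_total u v with h | h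
  · exact pd_core_ineq u v h
  · have h2 := pd_core_ineq v u h
    have hc : max (min u 1) 0 * max (min v 1) 0 = max (min v 1) 0 * max (min u 1) 0 :=
      mul_comm _ _
    linarith [h2]

lemma pd_marg (u : ℝ) :
    max (min u 1) 0 + max (min (u - 1/2) (1/2)) 0 + max (min (u + 1/2) 1 - 1/2) 0 +
    max (1/2 - max ((1 - u)/2) 0) 0 + max (1 - max (1 - u/2) (1/2)) 0
    = 3 * max (min u 1) 0 := by
  rcases le_total u 0 with h0 | h0
  · rw [max_eq_right ((min_le_left u 1).trans h0),
      max_eq_right (show min (u - 1/2) (1/2) ≤ (0:ℝ) by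
        have := min_le_left (u - 1/2) (1/2 : ℝ); linarith),
      max_eq_right (show min (u + 1/2) 1 - 1/2 ≤ (0:ℝ) by
        have := min_le_left (u + 1/2) (1:ℝ); linarith),
      max_eq_right (show 1/2 - max ((1 - u)/2) 0 ≤ (0:ℝ) by
        have := le_max_left ((1 - u)/2) (0:ℝ); linarith),
      max_eq_right (show 1 - max (1 - u/2) (1/2) ≤ (0:ℝ) by
        have := le_max_left (1 - u/2) (1/2 : ℝ); linarith)]
    norm_num
  · rcases le_total u 1 with h1 | h1
    · rcases le_total u (1/2) with hh | hh
      · rw [min_eq_left h1, max_eq_left h0,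
          min_eq_left (show u - 1/2 ≤ (1:ℝ)/2 by linarith),
          max_eq_right (show u - 1/2 ≤ (0:ℝ) by linarith),
          min_eq_left (show u + 1/2 ≤ (1:ℝ) by linarith),
          max_eq_left (show (0:ℝ) ≤ u + 1/2 - 1/2 by linarith),
          max_eq_left (show (0:ℝ) ≤ (1 - u)/2 by linarith),
          max_eq_left (show (0:ℝ) ≤ 1/2 - (1 - u)/2 by linarith),
          max_eq_left (show (1:ℝ)/2 ≤ 1 - u/2 by linarith),
          max_eq_left (show (0:ℝ) ≤ 1 - (1 - u/2) by linarith)]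
        ring
      · rw [min_eq_left h1, max_eq_left h0,
          min_eq_left (show u - 1/2 ≤ (1:ℝ)/2 by linarith),
          max_eq_left (show (0:ℝ) ≤ u - 1/2 by linarith),
          min_eq_right (show (1:ℝ) ≤ u + 1/2 by linarith),
          max_eq_left (show (0:ℝ) ≤ 1 - (1:ℝ)/2 by norm_num),
          max_eq_left (show (0:ℝ) ≤ (1 - u)/2 by linarith),
          max_eq_left (show (0:ℝ) ≤ 1/2 - (1 - u)/2 by linarith),
          max_eq_left (show (1:ℝ)/2 ≤ 1 - u/2 by linarith),
          max_eq_left (show (0:ℝ) ≤ 1 - (1 - u/2) by linarith)]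
        ring
    · rw [min_eq_right h1, max_eq_left (show (0:ℝ) ≤ (1:ℝ) by norm_num),
        min_eq_right (show (1:ℝ)/2 ≤ u - 1/2 by linarith),
        max_eq_left (show (0:ℝ) ≤ (1:ℝ)/2 by norm_num),
        min_eq_right (show (1:ℝ) ≤ u + 1/2 by linarith),
        max_eq_left (show (0:ℝ) ≤ 1 - (1:ℝ)/2 by norm_num),
        max_eq_right (show (1 - u)/2 ≤ (0:ℝ) by linarith),
        max_eq_left (show (0:ℝ) ≤ 1/2 - (0:ℝ) by norm_num),
        max_eq_right (show 1 - u/2 ≤ (1:ℝ)/2 by linarith),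
        max_eq_left (show (0:ℝ) ≤ 1 - (1:ℝ)/2 by norm_num)]
      norm_num

lemma marg_val (u : ℝ) :
    (6:ENNReal)⁻¹ * volume ({x : ℝ | pdF 0 x ≤ u} ∩ Set.Ioo 0 1) +
    (6:ENNReal)⁻¹ * volume ({x : ℝ | pdF 0 x ≤ u} ∩ Set.Ioo 0 1) +
    (6:ENNReal)⁻¹ * volume ({x : ℝ | pdF 1 x ≤ u} ∩ Set.Ioo 0 1) +
    (6:ENNReal)⁻¹ * volume ({x : ℝ | pdF 1 x ≤ u} ∩ Set.Ioo 0 1) +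
    (6:ENNReal)⁻¹ * volume ({x : ℝ | pdF 2 x ≤ u} ∩ Set.Ioo 0 1) +
    (6:ENNReal)⁻¹ * volume ({x : ℝ | pdF 2 x ≤ u} ∩ Set.Ioo 0 1)
    = ENNReal.ofReal (max (min u 1) 0) := by
  rw [volM0, volM1, volM2,
    ofReal_max0 (min u 1), ofReal_max0 (min (u - 1/2) (1/2)),
    ofReal_max0 (min (u + 1/2) 1 - 1/2), ofReal_max0 (1/2 - max ((1 - u)/2) 0),
    ofReal_max0 (1 - max (1 - u/2) (1/2)),
    merge2 (le_max_right _ _) (le_max_right _ _),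
    merge2 (le_max_right _ _) (le_max_right _ _)]
  rw [← mul_add, ← mul_add, ← mul_add, ← mul_add, ← mul_add]
  rw [merge2 (le_max_right _ _) (le_max_right _ _),
    merge2 (by positivity) (by positivity),
    merge2 (by positivity) (by positivity),
    merge2 (by positivity) (by positivity),
    merge2 (by positivity) (by positivity)]
  rw [h6inv, ← ENNReal.ofReal_mul (by norm_num : (0:ℝ) ≤ 1/6)]
  congr 1
  linarith [pd_marg u]

lemma joint_bound (u v : ℝ) :
    (6:ENNReal)⁻¹ * volume ({x : ℝ | pdF 0 x ≤ u ∧ pdF 1 x ≤ v} ∩ Set.Ioo 0 1) +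
    (6:ENNReal)⁻¹ * volume ({x : ℝ | pdF 1 x ≤ u ∧ pdF 0 x ≤ v} ∩ Set.Ioo 0 1) +
    (6:ENNReal)⁻¹ * volume ({x : ℝ | pdF 0 x ≤ u ∧ pdF 2 x ≤ v} ∩ Set.Ioo 0 1) +
    (6:ENNReal)⁻¹ * volume ({x : ℝ | pdF 2 x ≤ u ∧ pdF 0 x ≤ v} ∩ Set.Ioo 0 1) +
    (6:ENNReal)⁻¹ * volume ({x : ℝ | pdF 1 x ≤ u ∧ pdF 2 x ≤ v} ∩ Set.Ioo 0 1) +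
    (6:ENNReal)⁻¹ * volume ({x : ℝ | pdF 2 x ≤ u ∧ pdF 1 x ≤ v} ∩ Set.Ioo 0 1)
    ≤ ENNReal.ofReal (max (min u 1) 0) * ENNReal.ofReal (max (min v 1) 0) := by
  rw [show {x : ℝ | pdF 1 x ≤ u ∧ pdF 0 x ≤ v} = {x : ℝ | pdF 0 x ≤ v ∧ pdF 1 x ≤ u} from
      Set.ext fun x => and_comm,
    show {x : ℝ | pdF 2 x ≤ u ∧ pdF 0 x ≤ v} = {x : ℝ | pdF 0 x ≤ v ∧ pdF 2 x ≤ u} from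
      Set.ext fun x => and_comm,
    show {x : ℝ | pdF 2 x ≤ u ∧ pdF 1 x ≤ v} = {x : ℝ | pdF 1 x ≤ v ∧ pdF 2 x ≤ u} from
      Set.ext fun x => and_comm,
    volJ01 u v, volJ01 v u, volJ02 u v, volJ02 v u, volJ12 u v, volJ12 v u,
    ofReal_max0 (min u (min (v - 1/2) (1/2))), ofReal_max0 (min u (min (v + 1/2) 1) - 1/2),
    ofReal_max0 (min v (min (u - 1/2) (1/2))), ofReal_max0 (min v (min (u + 1/2) 1) - 1/2),
    ofReal_max0 (min u (1/2) - max ((1 - v)/2) 0), ofReal_max0 (min u 1 - max (1 - v/2) (1/2)),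
    ofReal_max0 (min v (1/2) - max ((1 - u)/2) 0), ofReal_max0 (min v 1 - max (1 - u/2) (1/2)),
    ofReal_max0 (min (u - 1/2) (1/2) - max ((1 - v)/2) 0),
    ofReal_max0 (min (u + 1/2) 1 - max (1 - v/2) (1/2)),
    ofReal_max0 (min (v - 1/2) (1/2) - max ((1 - u)/2) 0),
    ofReal_max0 (min (v + 1/2) 1 - max (1 - u/2) (1/2)),
    merge2 (le_max_right _ _) (le_max_right _ _), merge2 (le_max_right _ _) (le_max_right _ _),
    merge2 (le_max_right _ _) (le_max_right _ _), merge2 (le_max_right _ _) (le_max_right _ _),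
    merge2 (le_max_right _ _) (le_max_right _ _), merge2 (le_max_right _ _) (le_max_right _ _)]
  rw [← mul_add, ← mul_add, ← mul_add, ← mul_add, ← mul_add]
  rw [merge2 (by positivity) (by positivity),
    merge2 (by positivity) (by positivity),
    merge2 (by positivity) (by positivity),
    merge2 (by positivity) (by positivity),
    merge2 (by positivity) (by positivity)]
  rw [h6inv, ← ENNReal.ofReal_mul (by norm_num : (0:ℝ) ≤ 1/6)]
  refine le_trans (ENNReal.ofReal_le_ofReal ?_)
    (le_of_eq (ENNReal.ofReal_mul (le_max_right _ _)))
  linarith [pd_real_ineq_full u v]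


/-- Let `r₁` be Uniform(0,1), `r₂ = {r₁ + 1/2}`, `r₃ = 1 − {2 r₁}`, and let `σ` be a
uniformly distributed random permutation of `{1,2,3}` independent of `r₁` (the
hypothesis `hσ` expresses both uniformity and independence).  Setting `Uᵢ = r_{σ(i)}`,
the variables `{U₁, U₂, U₃}` are pairwise negatively associated, i.e. pairwise
negatively quadrant dependent. -/
theorem permuted_displacement_three_pairwise_NA
    {Ω : Type*} [MeasurableSpace Ω] (μ : Measure Ω) [IsProbabilityMeasure μ]
    (r : Ω → ℝ) (hr : Measurable r)
    (hrlaw : μ.map r = volume.restrict (Set.Ioo (0 : ℝ) 1))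
    (σ : Ω → Equiv.Perm (Fin 3))
    (hσ : ∀ (π : Equiv.Perm (Fin 3)) (s : Set ℝ), MeasurableSet s →
      μ ({ω | σ ω = π} ∩ r ⁻¹' s) = (6 : ENNReal)⁻¹ * μ (r ⁻¹' s)) :
    ∀ i j : Fin 3, i ≠ j → ∀ u v : ℝ,
      μ {ω | (![r ω, Int.fract (r ω + 1 / 2), 1 - Int.fract (2 * r ω)]) (σ ω i) ≤ u ∧
             (![r ω, Int.fract (r ω + 1 / 2), 1 - Int.fract (2 * r ω)]) (σ ω j) ≤ v} ≤
      μ {ω | (![r ω, Int.fract (r ω + 1 / 2), 1 - Int.fract (2 * r ω)]) (σ ω i) ≤ u} *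
      μ {ω | (![r ω, Int.fract (r ω + 1 / 2), 1 - Int.fract (2 * r ω)]) (σ ω j) ≤ v} := by
  intro i j hij u v
  have hJ : μ {ω | (![r ω, Int.fract (r ω + 1 / 2), 1 - Int.fract (2 * r ω)]) (σ ω i) ≤ u ∧
             (![r ω, Int.fract (r ω + 1 / 2), 1 - Int.fract (2 * r ω)]) (σ ω j) ≤ v} =
      ∑ π : Equiv.Perm (Fin 3), (6:ENNReal)⁻¹ *
        volume ({x : ℝ | pdF (π i) x ≤ u ∧ pdF (π j) x ≤ v} ∩ Set.Ioo 0 1) :=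
    pd_key μ r hr hrlaw σ hσ (fun π => {x : ℝ | pdF (π i) x ≤ u ∧ pdF (π j) x ≤ v})
      (fun π => (measurableSet_le (pdF_meas _) measurable_const).inter
        (measurableSet_le (pdF_meas _) measurable_const))
  have hU : μ {ω | (![r ω, Int.fract (r ω + 1 / 2), 1 - Int.fract (2 * r ω)]) (σ ω i) ≤ u} =
      ∑ π : Equiv.Perm (Fin 3), (6:ENNReal)⁻¹ *
        volume ({x : ℝ | pdF (π i) x ≤ u} ∩ Set.Ioo 0 1) :=
    pd_key μ r hr hrlaw σ hσ (fun π => {x : ℝ | pdF (π i) x ≤ u})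
      (fun π => measurableSet_le (pdF_meas _) measurable_const)
  have hV : μ {ω | (![r ω, Int.fract (r ω + 1 / 2), 1 - Int.fract (2 * r ω)]) (σ ω j) ≤ v} =
      ∑ π : Equiv.Perm (Fin 3), (6:ENNReal)⁻¹ *
        volume ({x : ℝ | pdF (π j) x ≤ v} ∩ Set.Ioo 0 1) :=
    pd_key μ r hr hrlaw σ hσ (fun π => {x : ℝ | pdF (π j) x ≤ v})
      (fun π => measurableSet_le (pdF_meas _) measurable_const)
  have hsJ : (∑ π : Equiv.Perm (Fin 3), (6:ENNReal)⁻¹ *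
        volume ({x : ℝ | pdF (π i) x ≤ u ∧ pdF (π j) x ≤ v} ∩ Set.Ioo 0 1)) =
      (6:ENNReal)⁻¹ * volume ({x : ℝ | pdF 0 x ≤ u ∧ pdF 1 x ≤ v} ∩ Set.Ioo 0 1) +
      (6:ENNReal)⁻¹ * volume ({x : ℝ | pdF 1 x ≤ u ∧ pdF 0 x ≤ v} ∩ Set.Ioo 0 1) +
      (6:ENNReal)⁻¹ * volume ({x : ℝ | pdF 0 x ≤ u ∧ pdF 2 x ≤ v} ∩ Set.Ioo 0 1) +
      (6:ENNReal)⁻¹ * volume ({x : ℝ | pdF 2 x ≤ u ∧ pdF 0 x ≤ v} ∩ Set.Ioo 0 1) +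
      (6:ENNReal)⁻¹ * volume ({x : ℝ | pdF 1 x ≤ u ∧ pdF 2 x ≤ v} ∩ Set.Ioo 0 1) +
      (6:ENNReal)⁻¹ * volume ({x : ℝ | pdF 2 x ≤ u ∧ pdF 1 x ≤ v} ∩ Set.Ioo 0 1) :=
    sum_perm_pair (fun a b => (6:ENNReal)⁻¹ *
      volume ({x : ℝ | pdF a x ≤ u ∧ pdF b x ≤ v} ∩ Set.Ioo 0 1)) hij
  have hsU : (∑ π : Equiv.Perm (Fin 3), (6:ENNReal)⁻¹ *
        volume ({x : ℝ | pdF (π i) x ≤ u} ∩ Set.Ioo 0 1)) =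
      (6:ENNReal)⁻¹ * volume ({x : ℝ | pdF 0 x ≤ u} ∩ Set.Ioo 0 1) +
      (6:ENNReal)⁻¹ * volume ({x : ℝ | pdF 0 x ≤ u} ∩ Set.Ioo 0 1) +
      (6:ENNReal)⁻¹ * volume ({x : ℝ | pdF 1 x ≤ u} ∩ Set.Ioo 0 1) +
      (6:ENNReal)⁻¹ * volume ({x : ℝ | pdF 1 x ≤ u} ∩ Set.Ioo 0 1) +
      (6:ENNReal)⁻¹ * volume ({x : ℝ | pdF 2 x ≤ u} ∩ Set.Ioo 0 1) +
      (6:ENNReal)⁻¹ * volume ({x : ℝ | pdF 2 x ≤ u} ∩ Set.Ioo 0 1) :=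
    sum_perm_single (fun a => (6:ENNReal)⁻¹ *
      volume ({x : ℝ | pdF a x ≤ u} ∩ Set.Ioo 0 1)) i
  have hsV : (∑ π : Equiv.Perm (Fin 3), (6:ENNReal)⁻¹ *
        volume ({x : ℝ | pdF (π j) x ≤ v} ∩ Set.Ioo 0 1)) =
      (6:ENNReal)⁻¹ * volume ({x : ℝ | pdF 0 x ≤ v} ∩ Set.Ioo 0 1) +
      (6:ENNReal)⁻¹ * volume ({x : ℝ | pdF 0 x ≤ v} ∩ Set.Ioo 0 1) +
      (6:ENNReal)⁻¹ * volume ({x : ℝ | pdF 1 x ≤ v} ∩ Set.Ioo 0 1) +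
      (6:ENNReal)⁻¹ * volume ({x : ℝ | pdF 1 x ≤ v} ∩ Set.Ioo 0 1) +
      (6:ENNReal)⁻¹ * volume ({x : ℝ | pdF 2 x ≤ v} ∩ Set.Ioo 0 1) +
      (6:ENNReal)⁻¹ * volume ({x : ℝ | pdF 2 x ≤ v} ∩ Set.Ioo 0 1) :=
    sum_perm_single (fun a => (6:ENNReal)⁻¹ *
      volume ({x : ℝ | pdF a x ≤ v} ∩ Set.Ioo 0 1)) j
  rw [hJ, hsJ, hU, hsU, hV, hsV, marg_val u, marg_val v]
  exact joint_bound u v
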